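/- Let (Ω, 𝒜, P) be a measurable space equipped with a probability measure P, and let X be a compact metric space. Let ω ↦ μ_ω and ω ↦ μ'_ω be two measurable families of Borel probability measures on X, and let ν be the mixture measure defined by ν(A) = ∫_Ω μ'_ω(A) dP(ω) for every Borel set A ⊆ X. Let C be a set of real-valued functions on X that contains the zero function and is closed under multiplication by positive scalars, and define W_C(μ, ν) := sup { ∫_X f dμ − ∫_X f dν : f ∈ C, f is 1-Lipschitz }. Let d ∈ C be Lipschitz with constant K > 0, and assume ω ↦ ∫_X d dμ_ω and ω ↦ ∫_X d dμ'_ω are integrable with respect to P, and that ω ↦ W_C(μ_ω, ν) is integrable with respect to P. Then ∫_Ω ( ∫_X d dμ_ω − ∫_X d dμ'_ω ) dP(ω) ≤ K · ∫_Ω W_C(μ_ω, ν) dP(ω). -/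

import Mathlib

open MeasureTheory NNReal

/-- The class-restricted dual (IPM) form of the 1-Wasserstein distance:
`W_C(μ, ν) = sup { ∫ f dμ − ∫ f dν : f ∈ C, f is 1-Lipschitz }`. -/
noncomputable def WC {X : Type*} [MeasurableSpace X] [MetricSpace X]
    (C : Set (X → ℝ)) (μ ν : Measure X) : ℝ :=
  sSup {r : ℝ | ∃ f ∈ C, LipschitzWith 1 f ∧ r = ∫ x, f x ∂μ - ∫ x, f x ∂ν}

lemma cont_integrable {X : Type*} [MetricSpace X] [CompactSpace X]
    [MeasurableSpace X] [BorelSpace X] (μ : Measure X) [IsFiniteMeasure μ]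
    {f : X → ℝ} (hf : Continuous f) : Integrable f μ := by
  have := (hf.locallyIntegrable (μ := μ)).integrableOn_isCompact isCompact_univ
  rwa [integrableOn_univ] at this

/-- Proposition 2 (shared discriminator), core inequality: for a shared discriminator
`d ∈ C` with Lipschitz constant `K > 0`, the averaged adversarial loss is bounded by
`K` times the expected class-restricted Wasserstein distance to the mixture measure `ν`. -/
theorem shared_discriminator_bound
    {Ω X : Type*} [MeasurableSpace Ω] [MetricSpace X] [CompactSpace X]
    [MeasurableSpace X] [BorelSpace X]
    (P : Measure Ω) [IsProbabilityMeasure P]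
    (μ μ' : Ω → Measure X)
    (hμprob : ∀ ω, IsProbabilityMeasure (μ ω))
    (hμ'prob : ∀ ω, IsProbabilityMeasure (μ' ω))
    (hμmeas : ∀ s : Set X, MeasurableSet s → Measurable fun ω => μ ω s)
    (hμ'meas : ∀ s : Set X, MeasurableSet s → Measurable fun ω => μ' ω s)
    (ν : Measure X) [IsProbabilityMeasure ν]
    (hν : ∀ A : Set X, MeasurableSet A → ν A = ∫⁻ ω, μ' ω A ∂P)
    (C : Set (X → ℝ)) (h0 : (0 : X → ℝ) ∈ C)
    (hC : ∀ f ∈ C, ∀ c : ℝ, 0 < c → c • f ∈ C)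
    (d : X → ℝ) (hd : d ∈ C) (K : ℝ≥0) (hK : 0 < K) (hLip : LipschitzWith K d)
    (hint1 : Integrable (fun ω => ∫ x, d x ∂(μ ω)) P)
    (hint2 : Integrable (fun ω => ∫ x, d x ∂(μ' ω)) P)
    (hint3 : Integrable (fun ω => WC C (μ ω) ν) P) :
    ∫ ω, (∫ x, d x ∂(μ ω) - ∫ x, d x ∂(μ' ω)) ∂P
      ≤ (K : ℝ) * ∫ ω, WC C (μ ω) ν ∂P := by
  -- X is nonempty
  haveI : Nonempty X := by
    by_contra h
    rw [not_nonempty_iff] at h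
    have h1 : ν Set.univ = 1 := measure_univ
    rw [Set.univ_eq_empty_iff.2 h, measure_empty] at h1
    exact zero_ne_one h1
  obtain ⟨x0⟩ := ‹Nonempty X›
  have hdcont : Continuous d := hLip.continuous
  -- Step 1: ∫ d dν = ∫ ω, ∫ d dμ'ω dP
  have hμ'M : Measurable μ' := Measure.measurable_of_measurable_coe μ' hμ'meas
  have hνbind : ν = P.bind μ' := by
    ext s hs
    rw [Measure.bind_apply hs hμ'M.aemeasurable, hν s hs]
  -- Bound M on |d|
  obtain ⟨M, hM⟩ := (isCompact_univ.image hdcont).isBounded.subset_closedBall 0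
  have hMd : ∀ x : X, |d x| ≤ M := by
    intro x
    have : d x ∈ Metric.closedBall (0:ℝ) M := hM ⟨x, Set.mem_univ x, rfl⟩
    simpa [Real.dist_eq] using this
  have hM0 : 0 ≤ M := le_trans (abs_nonneg _) (hMd x0)
  -- nonneg function g = d + M
  set g : X → ℝ := fun x => d x + M with hg
  have hgcont : Continuous g := hdcont.add continuous_const
  have hgnn : ∀ x, 0 ≤ g x := fun x => by
    have := (abs_le.1 (hMd x)).1; simp only [hg]; linarith
  have key : ∀ (m : Measure X) [IsProbabilityMeasure m],
      ∫⁻ x, ENNReal.ofReal (g x) ∂m = ENNReal.ofReal (∫ x, g x ∂m) := by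
    intro m _
    rw [ofReal_integral_eq_lintegral_ofReal (cont_integrable m hgcont)
      (Filter.Eventually.of_forall hgnn)]
  have hgint : ∀ (m : Measure X) [IsProbabilityMeasure m], ∫ x, g x ∂m = (∫ x, d x ∂m) + M := by
    intro m _
    rw [integral_add (cont_integrable m hdcont) (integrable_const M), integral_const]
    simp
  have step1 : ∫ x, d x ∂ν = ∫ ω, ∫ x, d x ∂(μ' ω) ∂P := by
    have hgν : ∫⁻ x, ENNReal.ofReal (g x) ∂ν = ∫⁻ ω, ∫⁻ x, ENNReal.ofReal (g x) ∂(μ' ω) ∂P := by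
      rw [hνbind, Measure.lintegral_bind hμ'M.aemeasurable]
      exact (ENNReal.measurable_ofReal.comp hgcont.measurable).aemeasurable
    have hGω : ∀ ω, ∫⁻ x, ENNReal.ofReal (g x) ∂(μ' ω) = ENNReal.ofReal ((∫ x, d x ∂(μ' ω)) + M) := by
      intro ω
      haveI := hμ'prob ω
      rw [key (μ' ω), hgint (μ' ω)]
    have hG2 : ∫⁻ ω, ENNReal.ofReal ((∫ x, d x ∂(μ' ω)) + M) ∂P
        = ENNReal.ofReal (∫ ω, ((∫ x, d x ∂(μ' ω)) + M) ∂P) := by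
      refine (ofReal_integral_eq_lintegral_ofReal (hint2.add (integrable_const M))
        (Filter.Eventually.of_forall fun ω => ?_)).symm
      show (0:ℝ) ≤ (∫ x, d x ∂(μ' ω)) + M
      haveI := hμ'prob ω
      have : ∫ x, g x ∂(μ' ω) = (∫ x, d x ∂(μ' ω)) + M := hgint (μ' ω)
      have h2 : 0 ≤ ∫ x, g x ∂(μ' ω) := integral_nonneg hgnn
      linarith
    have hgνval : ∫⁻ x, ENNReal.ofReal (g x) ∂ν = ENNReal.ofReal ((∫ x, d x ∂ν) + M) := by
      rw [key ν, hgint ν]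
    have := hgν
    rw [hgνval] at this
    simp only [hGω] at this
    rw [hG2] at this
    have hintadd : ∫ ω, ((∫ x, d x ∂(μ' ω)) + M) ∂P = (∫ ω, ∫ x, d x ∂(μ' ω) ∂P) + M := by
      rw [integral_add hint2 (integrable_const M), integral_const]; simp
    have hle1 : 0 ≤ (∫ x, d x ∂ν) + M := by
      have : ∫ x, g x ∂ν = (∫ x, d x ∂ν) + M := hgint ν
      have h2 : 0 ≤ ∫ x, g x ∂ν := integral_nonneg hgnn
      linarith
    have hle2 : 0 ≤ ∫ ω, ((∫ x, d x ∂(μ' ω)) + M) ∂P := by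
      refine integral_nonneg fun ω => ?_
      haveI := hμ'prob ω
      have : ∫ x, g x ∂(μ' ω) = (∫ x, d x ∂(μ' ω)) + M := hgint (μ' ω)
      have h2 : 0 ≤ ∫ x, g x ∂(μ' ω) := integral_nonneg hgnn
      simp only [Pi.zero_apply]
      linarith
    have := (ENNReal.ofReal_eq_ofReal_iff hle1 hle2).1 this
    rw [hintadd] at this
    linarith
  -- Step 2: bddAbove of the WC set
  have hbdd : ∀ ω, BddAbove {r : ℝ | ∃ f ∈ C, LipschitzWith 1 f ∧
      r = ∫ x, f x ∂(μ ω) - ∫ x, f x ∂ν} := by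
    intro ω
    haveI := hμprob ω
    refine ⟨2 * Metric.diam (Set.univ : Set X), ?_⟩
    rintro r ⟨f, -, hf1, rfl⟩
    have hfc : Continuous f := hf1.continuous
    have hub : ∀ x, f x ≤ f x0 + Metric.diam (Set.univ : Set X) := by
      intro x
      have h1 := hf1.dist_le_mul x x0
      simp only [Real.dist_eq, NNReal.coe_one, one_mul] at h1
      have hd' : dist x x0 ≤ Metric.diam (Set.univ : Set X) :=
        Metric.dist_le_diam_of_mem isCompact_univ.isBounded trivial trivial
      have := abs_le.1 (le_trans h1 hd')
      linarith [this.1]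
    have hlb : ∀ x, f x0 - Metric.diam (Set.univ : Set X) ≤ f x := by
      intro x
      have h1 := hf1.dist_le_mul x x0
      simp only [Real.dist_eq, NNReal.coe_one, one_mul] at h1
      have hd' : dist x x0 ≤ Metric.diam (Set.univ : Set X) :=
        Metric.dist_le_diam_of_mem isCompact_univ.isBounded trivial trivial
      have := abs_le.1 (le_trans h1 hd')
      linarith [this.1]
    have h1 : ∫ x, f x ∂(μ ω) ≤ f x0 + Metric.diam (Set.univ : Set X) := by
      calc ∫ x, f x ∂(μ ω) ≤ ∫ _x, (f x0 + Metric.diam (Set.univ : Set X)) ∂(μ ω) :=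
            integral_mono (cont_integrable _ hfc) (integrable_const _) hub
        _ = f x0 + Metric.diam (Set.univ : Set X) := by simp
    have h2 : f x0 - Metric.diam (Set.univ : Set X) ≤ ∫ x, f x ∂ν := by
      calc f x0 - Metric.diam (Set.univ : Set X)
            = ∫ _x, (f x0 - Metric.diam (Set.univ : Set X)) ∂ν := by simp
        _ ≤ ∫ x, f x ∂ν := integral_mono (integrable_const _) (cont_integrable _ hfc) hlb
    linarith
  -- Step 3: pointwise bound
  have hpt : ∀ ω, ∫ x, d x ∂(μ ω) - ∫ x, d x ∂ν ≤ (K : ℝ) * WC C (μ ω) ν := by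
    intro ω
    haveI := hμprob ω
    set c : ℝ := (K : ℝ)⁻¹ with hc
    have hcpos : 0 < c := by positivity
    have hmem : c • d ∈ C := hC d hd c hcpos
    have hlip1 : LipschitzWith 1 (c • d) := by
      refine LipschitzWith.of_dist_le_mul fun x y => ?_
      have h1 := hLip.dist_le_mul x y
      simp only [Pi.smul_apply, smul_eq_mul, Real.dist_eq, NNReal.coe_one, one_mul]
      rw [← mul_sub, abs_mul, abs_of_pos hcpos]
      rw [Real.dist_eq] at h1
      have hKne : (K : ℝ) ≠ 0 := ne_of_gt (by exact_mod_cast hK)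
      calc c * |d x - d y| ≤ c * ((K : ℝ) * dist x y) :=
            mul_le_mul_of_nonneg_left h1 hcpos.le
        _ = (c * (K : ℝ)) * dist x y := by ring
        _ = dist x y := by rw [hc, inv_mul_cancel₀ hKne, one_mul]
    have hr : (∫ x, (c • d) x ∂(μ ω) - ∫ x, (c • d) x ∂ν) ∈
        {r : ℝ | ∃ f ∈ C, LipschitzWith 1 f ∧ r = ∫ x, f x ∂(μ ω) - ∫ x, f x ∂ν} :=
      ⟨c • d, hmem, hlip1, rfl⟩
    have hle := le_csSup (hbdd ω) hr
    have hsmul : ∀ (m : Measure X), ∫ x, (c • d) x ∂m = c * ∫ x, d x ∂m := by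
      intro m
      simp only [Pi.smul_apply, smul_eq_mul]
      rw [integral_const_mul]
    rw [hsmul, hsmul] at hle
    have hKc : (K : ℝ) * c = 1 := by
      rw [hc]; field_simp
    have := mul_le_mul_of_nonneg_left hle (K.coe_nonneg)
    calc ∫ x, d x ∂(μ ω) - ∫ x, d x ∂ν
        = (K : ℝ) * (c * ∫ x, d x ∂(μ ω) - c * ∫ x, d x ∂ν) := by
          rw [mul_sub, ← mul_assoc, ← mul_assoc, hKc, one_mul, one_mul]
      _ ≤ (K : ℝ) * WC C (μ ω) ν := this
  -- Step 4: integrate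
  have hintL : Integrable (fun ω => ∫ x, d x ∂(μ ω) - ∫ x, d x ∂ν) P :=
    hint1.sub (integrable_const _)
  have hintR : Integrable (fun ω => (K : ℝ) * WC C (μ ω) ν) P := hint3.const_mul _
  have hmono : ∫ ω, (∫ x, d x ∂(μ ω) - ∫ x, d x ∂ν) ∂P
      ≤ ∫ ω, (K : ℝ) * WC C (μ ω) ν ∂P :=
    integral_mono hintL hintR hpt
  rw [integral_const_mul] at hmono
  have hL : ∫ ω, (∫ x, d x ∂(μ ω) - ∫ x, d x ∂ν) ∂P
      = ∫ ω, (∫ x, d x ∂(μ ω) - ∫ x, d x ∂(μ' ω)) ∂P := by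
    rw [integral_sub hint1 (integrable_const _), integral_const,
      integral_sub hint1 hint2]
    simp [step1]
  rw [hL] at hmono
  exact hmono
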